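/- Let Λ be a k-graph with a pseudo free self-similar action of a group G. Then the topology on G_{G,Λ} generated by the family B_{G,Λ} of basic sets is Hausdorff. -/

import Mathlib

namespace SSKG

/-- `ℕ^k`. -/
abbrev NK (k : ℕ) := Fin k → ℕ
/-- `ℤ^k`. -/
abbrev ZK (k : ℕ) := Fin k → ℤ

lemma le0 {k : ℕ} (p : NK k) : 0 ≤ p := Pi.le_def.mpr fun i => Nat.zero_le (p i)

/-- A (row-finite, source-free, countable) `k`-graph: a countable small category with a
degree functor `d` into `ℕ^k` satisfying the unique factorization property. -/
structure KGraph (k : ℕ) where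
  Obj : Type
  Mor : Type
  countable_mor : Countable Mor
  r : Mor → Obj
  s : Mor → Obj
  d : Mor → NK k
  ofObj : Obj → Mor
  comp : (μ ν : Mor) → s μ = r ν → Mor
  r_ofObj : ∀ v, r (ofObj v) = v
  s_ofObj : ∀ v, s (ofObj v) = v
  d_ofObj : ∀ v, d (ofObj v) = 0
  eq_ofObj_of_d_eq_zero : ∀ μ, d μ = 0 → ∃ v, μ = ofObj v
  r_comp : ∀ μ ν h, r (comp μ ν h) = r μ
  s_comp : ∀ μ ν h, s (comp μ ν h) = s ν
  d_comp : ∀ μ ν h, d (comp μ ν h) = d μ + d ν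
  comp_ofObj : ∀ μ (h : s μ = r (ofObj (s μ))), comp μ (ofObj (s μ)) h = μ
  ofObj_comp : ∀ μ (h : s (ofObj (r μ)) = r μ), comp (ofObj (r μ)) μ h = μ
  comp_assoc : ∀ μ ν ρ (h₁ : s μ = r ν) (h₂ : s ν = r ρ),
      comp (comp μ ν h₁) ρ ((s_comp μ ν h₁).trans h₂)
        = comp μ (comp ν ρ h₂) (h₁.trans (r_comp ν ρ h₂).symm)
  factor_exists : ∀ μ (n m : NK k), d μ = n + m →
      ∃ (α β : Mor) (h : s α = r β), d α = n ∧ d β = m ∧ comp α β h = μ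
  factor_unique : ∀ (α β α' β' : Mor) (h : s α = r β) (h' : s α' = r β'),
      d α = d α' → comp α β h = comp α' β' h' → α = α' ∧ β = β'
  row_finite : ∀ (v : Obj) (n : NK k), {μ : Mor | r μ = v ∧ d μ = n}.Finite
  no_sources : ∀ (v : Obj) (n : NK k), ∃ μ : Mor, r μ = v ∧ d μ = n

lemma KGraph.comp_congr {k : ℕ} (Λ : KGraph k) {μ ν ν' : Λ.Mor} (hν : ν = ν')
    (h : Λ.s μ = Λ.r ν) (h' : Λ.s μ = Λ.r ν') : Λ.comp μ ν h = Λ.comp μ ν' h' := by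
  cases hν; rfl

/-- An edge: a morphism of degree `e_i` for some `i`. -/
def IsEdge {k : ℕ} (Λ : KGraph k) (μ : Λ.Mor) : Prop := ∃ i : Fin k, Λ.d μ = Pi.single i 1

/-- Membership in `Λ⁰ ∪ Λᵉ` (a vertex or an edge). -/
def VorE {k : ℕ} (Λ : KGraph k) (μ : Λ.Mor) : Prop := Λ.d μ = 0 ∨ IsEdge Λ μ

/-- A self-similar action of a group `G` on a `k`-graph `Λ`: an action by degree-,
range- and source-preserving automorphisms, together with a restriction map
`(g, μ) ↦ g|_μ` satisfying the Exel–Pardo style axioms. -/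
structure SelfSimilar (k : ℕ) (G : Type) [Group G] (Λ : KGraph k) where
  act : G → Λ.Mor → Λ.Mor
  res : G → Λ.Mor → G
  act_one : ∀ μ, act 1 μ = μ
  act_mul : ∀ g h μ, act (g * h) μ = act g (act h μ)
  act_d : ∀ g μ, Λ.d (act g μ) = Λ.d μ
  act_ofObj_r : ∀ g μ, act g (Λ.ofObj (Λ.r μ)) = Λ.ofObj (Λ.r (act g μ))
  act_ofObj_s : ∀ g μ, act g (Λ.ofObj (Λ.s μ)) = Λ.ofObj (Λ.s (act g μ))
  compat : ∀ g μ ν (h : Λ.s μ = Λ.r ν), Λ.s (act g μ) = Λ.r (act (res g μ) ν)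
  act_comp : ∀ g μ ν (h : Λ.s μ = Λ.r ν),
      act g (Λ.comp μ ν h) = Λ.comp (act g μ) (act (res g μ) ν) (compat g μ ν h)
  res_ofObj : ∀ g v, res g (Λ.ofObj v) = g
  res_comp : ∀ g μ ν (h : Λ.s μ = Λ.r ν), res g (Λ.comp μ ν h) = res (res g μ) ν
  res_one : ∀ μ, res 1 μ = 1
  res_mul : ∀ g h μ, res (g * h) μ = res g (act h μ) * res h μ

variable {k : ℕ} {G : Type} [Group G] {Λ : KGraph k}

/-- The induced action of `G` on the vertices `Λ⁰`. -/
def SelfSimilar.actV (S : SelfSimilar k G Λ) (g : G) (v : Λ.Obj) : Λ.Obj :=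
  Λ.s (S.act g (Λ.ofObj v))

/-- The action is pseudo free. -/
def SelfSimilar.PseudoFree (S : SelfSimilar k G Λ) : Prop :=
  ∀ (g : G) (μ : Λ.Mor), S.act g μ = μ → S.res g μ = 1 → g = 1

/-- An infinite path in `Λ`: a degree-preserving functor `Ω_k → Λ`, recorded through
its segments `x(p,q)` for `p ≤ q`. -/
structure InfPath {k : ℕ} (Λ : KGraph k) where
  seg : ∀ p q : NK k, p ≤ q → Λ.Mor
  d_seg : ∀ p q (h : p ≤ q), Λ.d (seg p q h) = fun i => q i - p i
  src_seg : ∀ p q m (h₁ : p ≤ q) (h₂ : q ≤ m), Λ.s (seg p q h₁) = Λ.r (seg q m h₂)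
  comp_seg : ∀ p q m (h₁ : p ≤ q) (h₂ : q ≤ m),
      Λ.comp (seg p q h₁) (seg q m h₂) (src_seg p q m h₁ h₂) = seg p m (h₁.trans h₂)

lemma InfPath.ext' {x y : InfPath Λ} (h : x.seg = y.seg) : x = y := by
  cases x; cases y; cases h; rfl

/-- The shift `σ^p(x)`. -/
def InfPath.shift (x : InfPath Λ) (p : NK k) : InfPath Λ where
  seg m n h := x.seg (m + p) (n + p) (add_le_add_left h p)
  d_seg m n h := by
    rw [x.d_seg]; funext i; simp only [Pi.add_apply]; omega
  src_seg m n l h₁ h₂ := x.src_seg _ _ _ _ _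
  comp_seg m n l h₁ h₂ := x.comp_seg _ _ _ _ _

/-- The action of `G` on infinite paths: `(g·x)(p,q) = g|_{x(0,p)} · x(p,q)`. -/
def SelfSimilar.actInf (S : SelfSimilar k G Λ) (g : G) (x : InfPath Λ) : InfPath Λ where
  seg p q h := S.act (S.res g (x.seg 0 p (le0 p))) (x.seg p q h)
  d_seg p q h := by rw [S.act_d, x.d_seg]
  src_seg p q m h₁ h₂ := by
    have key : S.res g (x.seg 0 q (le0 q))
        = S.res (S.res g (x.seg 0 p (le0 p))) (x.seg p q h₁) := by
      rw [← S.res_comp g (x.seg 0 p (le0 p)) (x.seg p q h₁) (x.src_seg 0 p q (le0 p) h₁),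
        x.comp_seg 0 p q (le0 p) h₁]
    beta_reduce
    rw [key]
    exact S.compat _ _ _ (x.src_seg p q m h₁ h₂)
  comp_seg p q m h₁ h₂ := by
    have key : S.res g (x.seg 0 q (le0 q))
        = S.res (S.res g (x.seg 0 p (le0 p))) (x.seg p q h₁) := by
      rw [← S.res_comp g (x.seg 0 p (le0 p)) (x.seg p q h₁) (x.src_seg 0 p q (le0 p) h₁),
        x.comp_seg 0 p q (le0 p) h₁]
    beta_reduce
    rw [← x.comp_seg p q m h₁ h₂, S.act_comp]
    exact Λ.comp_congr (by rw [key]) _ _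

/-- The restriction cocycle `g|_x : ℕ^k → G`, `g|_x(p) = g|_{x(0,p)}`. -/
def SelfSimilar.resInf (S : SelfSimilar k G Λ) (g : G) (x : InfPath Λ) : NK k → G :=
  fun p => S.res g (x.seg 0 p (le0 p))

/-- `IsConcat μ x y` says that `y = μx`, the concatenation of the finite path `μ`
(with `x(0,0) = s(μ)`) and the infinite path `x`. -/
def IsConcat (Λ : KGraph k) (μ : Λ.Mor) (x y : InfPath Λ) : Prop :=
  x.seg 0 0 le_rfl = Λ.ofObj (Λ.s μ) ∧
  y.seg 0 (Λ.d μ) (le0 _) = μ ∧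
  ∀ m n (h : m ≤ n), y.seg (Λ.d μ + m) (Λ.d μ + n) (add_le_add_right h _) = x.seg m n h

/-- The cylinder set `Z(μ)`. -/
def cylinder (Λ : KGraph k) (μ : Λ.Mor) : Set (InfPath Λ) :=
  {x : InfPath Λ | x.seg 0 (Λ.d μ) (le0 _) = μ}

/-- The cylinder-set topology on `Λ^∞`. -/
instance instTopInfPath (Λ : KGraph k) : TopologicalSpace (InfPath Λ) :=
  TopologicalSpace.generateFrom {U | ∃ μ : Λ.Mor, U = cylinder Λ μ}

/-- `Λ` is `G`-cofinal. -/
def GCofinal (S : SelfSimilar k G Λ) : Prop :=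
  ∀ (x : InfPath Λ) (v : Λ.Obj), ∃ (p : NK k) (μ : Λ.Mor) (g : G),
    Λ.ofObj (Λ.s μ) = x.seg p p le_rfl ∧ Λ.r μ = S.actV g v

/-- `Λ` is `G`-aperiodic. -/
def GAperiodic (S : SelfSimilar k G Λ) : Prop :=
  ∀ v : Λ.Obj, ∃ x : InfPath Λ, x.seg 0 0 le_rfl = Λ.ofObj v ∧
    ∀ (g : G) (p q : NK k), g ≠ 1 ∨ p ≠ q → x.shift p ≠ S.actInf g (x.shift q)

/-- A subset `U ⊆ Λ^∞` is invariant for the self-similar action. -/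
def InvariantSet (S : SelfSimilar k G Λ) (U : Set (InfPath Λ)) : Prop :=
  ∀ (g : G) (μ ν : Λ.Mor) (x z y : InfPath Λ),
    Λ.s μ = S.actV g (Λ.s ν) → IsConcat Λ ν x z → IsConcat Λ μ (S.actInf g x) y →
    z ∈ U → y ∈ U

/-- The minimal common extensions `Λ^min(μ,ν)`. -/
def Lmin (Λ : KGraph k) (μ ν : Λ.Mor) : Set (Λ.Mor × Λ.Mor) :=
  {p | ∃ (h₁ : Λ.s μ = Λ.r p.1) (h₂ : Λ.s ν = Λ.r p.2),
      Λ.comp μ p.1 h₁ = Λ.comp ν p.2 h₂ ∧ Λ.d (Λ.comp μ p.1 h₁) = Λ.d μ ⊔ Λ.d ν}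

/-- The group `C(ℕ^k, G)` of all functions `ℕ^k → G` under pointwise multiplication. -/
abbrev CkG (k : ℕ) (G : Type) [Group G] := NK k → G

/-- The normal subgroup of eventually trivial functions. -/
def tailTrivial (k : ℕ) (G : Type) [Group G] : Subgroup (CkG k G) where
  carrier := {f | ∃ z : NK k, ∀ p, z ≤ p → f p = 1}
  one_mem' := ⟨0, fun _ _ => rfl⟩
  mul_mem' := by
    rintro f g ⟨z₁, h₁⟩ ⟨z₂, h₂⟩
    exact ⟨z₁ ⊔ z₂, fun p hp => by
      rw [Pi.mul_apply, h₁ p (le_trans le_sup_left hp), h₂ p (le_trans le_sup_right hp),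
        one_mul]⟩
  inv_mem' := by
    rintro f ⟨z, h⟩
    exact ⟨z, fun p hp => by rw [Pi.inv_apply, h p hp, inv_one]⟩

instance tailTrivialNormal (k : ℕ) (G : Type) [Group G] : (tailTrivial k G).Normal := by
  constructor
  rintro f ⟨z, hz⟩ g
  exact ⟨z, fun p hp => by
    simp only [Pi.mul_apply, Pi.inv_apply, hz p hp, mul_one, mul_inv_cancel]⟩

/-- The quotient group `Q(ℕ^k, G) = C(ℕ^k,G)/∼`. -/
abbrev QkG (k : ℕ) (G : Type) [Group G] := CkG k G ⧸ tailTrivial k G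

/-- Coercion `ℕ^k → ℤ^k`. -/
def toZ {k : ℕ} (p : NK k) : ZK k := fun i => (p i : ℤ)

open scoped Classical in
/-- The translation `T_z` on functions `ℕ^k → G`, for `z ∈ ℤ^k`. -/
noncomputable def transFun {k : ℕ} {G : Type} [Group G] (z : ZK k) (f : CkG k G) : CkG k G :=
  fun p => if (∀ i, z i ≤ (p i : ℤ)) then f (fun i => ((p i : ℤ) - z i).toNat) else 1

/-- The ambient space `Λ^∞ × (Q(ℕ^k,G) ⋊ ℤ^k) × Λ^∞` containing the self-similar
path groupoid (as a set). -/
abbrev Triple (k : ℕ) (G : Type) [Group G] (Λ : KGraph k) :=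
  InfPath Λ × (QkG k G × ZK k) × InfPath Λ

/-- The basic set `Z(μ, g, ν)` of the self-similar path groupoid. -/
def Zset (S : SelfSimilar k G Λ) (μ : Λ.Mor) (g : G) (ν : Λ.Mor) : Set (Triple k G Λ) :=
  {t | ∃ x y z : InfPath Λ, IsConcat Λ ν x z ∧ IsConcat Λ μ (S.actInf g x) y ∧
    t = (y, ((QuotientGroup.mk (transFun (toZ (Λ.d μ)) (S.resInf g x)) : QkG k G),
      toZ (Λ.d μ) - toZ (Λ.d ν)), z)}

/-- The family `B_{G,Λ}` of basic sets. -/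
def BGL (S : SelfSimilar k G Λ) : Set (Set (Triple k G Λ)) :=
  {A | ∃ (μ ν : Λ.Mor) (g : G), Λ.s μ = S.actV g (Λ.s ν) ∧ A = Zset S μ g ν}

/-- The self-similar path groupoid `G_{G,Λ}` (as a set of triples). -/
def Gpd (S : SelfSimilar k G Λ) : Set (Triple k G Λ) :=
  {t | ∃ (g : G) (μ ν : Λ.Mor), Λ.s μ = S.actV g (Λ.s ν) ∧ t ∈ Zset S μ g ν}

/-- The topology on `G_{G,Λ}` generated by the basic sets. -/
def gpdTop (S : SelfSimilar k G Λ) : TopologicalSpace {t : Triple k G Λ // t ∈ Gpd S} :=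
  TopologicalSpace.generateFrom
    {A | ∃ (μ ν : Λ.Mor) (g : G), A = {t | (t : Triple k G Λ) ∈ Zset S μ g ν}}


/-! ### Auxiliary lemmas for the proof of statement 13 -/

lemma nk_le_add_left (a b : NK k) : a ≤ b + a :=
  Pi.le_def.mpr fun i => by simp only [Pi.add_apply]; omega

lemma seg_congr (x : InfPath Λ) {p q p' q' : NK k} (hp : p = p') (hq : q = q')
    (h : p ≤ q) (h' : p' ≤ q') : x.seg p q h = x.seg p' q' h' := by
  subst hp; subst hq; rfl

lemma comp_congr2 (Λ : KGraph k) {μ μ' ν ν' : Λ.Mor} (hμ : μ = μ') (hν : ν = ν')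
    (h : Λ.s μ = Λ.r ν) (h' : Λ.s μ' = Λ.r ν') : Λ.comp μ ν h = Λ.comp μ' ν' h' := by
  subst hμ; subst hν; rfl

lemma d_seg0 (x : InfPath Λ) (N : NK k) : Λ.d (x.seg 0 N (le0 N)) = N := by
  rw [x.d_seg]; funext i; simp

lemma vertex_seg (x : InfPath Λ) (N : NK k) :
    x.seg N N le_rfl = Λ.ofObj (Λ.s (x.seg 0 N (le0 N))) := by
  have hd : Λ.d (x.seg N N le_rfl) = 0 := by rw [x.d_seg]; funext i; simp
  obtain ⟨v, hv⟩ := Λ.eq_ofObj_of_d_eq_zero _ hd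
  have hs : Λ.s (x.seg 0 N (le0 N)) = v := by
    rw [x.src_seg 0 N N (le0 N) le_rfl, hv, Λ.r_ofObj]
  rw [hs, hv]

lemma seg_initial_eq {x1 x2 : InfPath Λ} {m N : NK k} (hmN : m ≤ N)
    (h : x1.seg 0 N (le0 N) = x2.seg 0 N (le0 N)) :
    x1.seg 0 m (le0 m) = x2.seg 0 m (le0 m) := by
  have c1 := x1.comp_seg 0 m N (le0 m) hmN
  have c2 := x2.comp_seg 0 m N (le0 m) hmN
  have hdeq : Λ.d (x1.seg 0 m (le0 m)) = Λ.d (x2.seg 0 m (le0 m)) := by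
    rw [d_seg0, d_seg0]
  exact (Λ.factor_unique _ _ _ _ _ _ hdeq (c1.trans (h.trans c2.symm))).1

lemma path_eq_of_initial {x1 x2 : InfPath Λ}
    (h : ∀ m, x1.seg 0 m (le0 m) = x2.seg 0 m (le0 m)) : x1 = x2 := by
  apply InfPath.ext'
  funext p q hpq
  have c1 := x1.comp_seg 0 p q (le0 p) hpq
  have c2 := x2.comp_seg 0 p q (le0 p) hpq
  have hdeq : Λ.d (x1.seg 0 p (le0 p)) = Λ.d (x2.seg 0 p (le0 p)) := by
    rw [d_seg0, d_seg0]
  exact (Λ.factor_unique _ _ _ _ _ _ hdeq (c1.trans ((h q).trans c2.symm))).2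

lemma exists_initial_ne {x1 x2 : InfPath Λ} (h : x1 ≠ x2) :
    ∃ m, x1.seg 0 m (le0 m) ≠ x2.seg 0 m (le0 m) := by
  by_contra hcon; push_neg at hcon; exact h (path_eq_of_initial hcon)

lemma concat_witness_eq {μ : Λ.Mor} {x x' z : InfPath Λ}
    (h : IsConcat Λ μ x z) (h' : IsConcat Λ μ x' z) : x = x' := by
  apply InfPath.ext'
  funext p q hpq
  exact (h.2.2 p q hpq).symm.trans (h'.2.2 p q hpq)

lemma concat_out_eq {μ : Λ.Mor} {x y y' : InfPath Λ}
    (h : IsConcat Λ μ x y) (h' : IsConcat Λ μ x y') : y = y' := by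
  apply path_eq_of_initial
  intro m
  have hsrc' : Λ.s μ = Λ.r (x.seg 0 m (le0 m)) := by
    rw [← x.src_seg 0 0 m le_rfl (le0 m), h.1, Λ.s_ofObj]
  have key : ∀ {w : InfPath Λ}, IsConcat Λ μ x w →
      w.seg 0 (Λ.d μ + m) (le0 _) = Λ.comp μ (x.seg 0 m (le0 m)) hsrc' := by
    intro w hw
    calc w.seg 0 (Λ.d μ + m) (le0 _)
        = Λ.comp (w.seg 0 (Λ.d μ) (le0 _)) (w.seg (Λ.d μ) (Λ.d μ + m) le_self_add)
            (w.src_seg 0 (Λ.d μ) (Λ.d μ + m) (le0 _) le_self_add) :=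
          (w.comp_seg 0 (Λ.d μ) (Λ.d μ + m) (le0 _) le_self_add).symm
      _ = Λ.comp μ (x.seg 0 m (le0 m)) hsrc' := by
          refine comp_congr2 Λ hw.2.1 ?_ _ _
          calc w.seg (Λ.d μ) (Λ.d μ + m) le_self_add
              = w.seg (Λ.d μ + 0) (Λ.d μ + m) (add_le_add_right (le0 m) _) :=
                seg_congr w (add_zero _).symm rfl _ _
            _ = x.seg 0 m (le0 m) := hw.2.2 0 m (le0 m)
  exact seg_initial_eq le_add_self ((key h).trans (key h').symm)

lemma res_shift (S : SelfSimilar k G Λ) (g : G) (x : InfPath Λ) (n m : NK k) :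
    S.res (S.res g (x.seg 0 n (le0 n))) (x.seg n (m + n) (nk_le_add_left n m))
      = S.res g (x.seg 0 (m + n) (le0 _)) := by
  rw [← S.res_comp g (x.seg 0 n (le0 n)) (x.seg n (m + n) (nk_le_add_left n m))
      (x.src_seg 0 n (m + n) (le0 n) (nk_le_add_left n m)),
    x.comp_seg 0 n (m + n) (le0 n) (nk_le_add_left n m)]

lemma actInf_shift (S : SelfSimilar k G Λ) (g : G) (x : InfPath Λ) (n : NK k) :
    S.actInf (S.res g (x.seg 0 n (le0 n))) (x.shift n) = (S.actInf g x).shift n := by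
  apply InfPath.ext'
  funext p q h
  show S.act (S.res (S.res g (x.seg 0 n (le0 n))) ((x.shift n).seg 0 p (le0 p)))
      ((x.shift n).seg p q h)
    = S.act (S.res g (x.seg 0 (p + n) (le0 _))) (x.seg (p + n) (q + n) (add_le_add_left h n))
  rw [show (x.shift n).seg 0 p (le0 p) = x.seg n (p + n) (nk_le_add_left n p) from
    seg_congr x (zero_add n) rfl _ _]
  rw [res_shift S g x n p]
  rfl

lemma IsConcat.extend {μ : Λ.Mor} {x z : InfPath Λ} (h : IsConcat Λ μ x z) (n : NK k) :
    IsConcat Λ (z.seg 0 (Λ.d μ + n) (le0 _)) (x.shift n) z := by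
  obtain ⟨h1, h2, h3⟩ := h
  have hd : Λ.d (z.seg 0 (Λ.d μ + n) (le0 _)) = Λ.d μ + n := d_seg0 z _
  refine ⟨?_, ?_, ?_⟩
  · calc (x.shift n).seg 0 0 le_rfl
        = x.seg n n le_rfl := seg_congr x (zero_add n) (zero_add n) _ _
      _ = z.seg (Λ.d μ + n) (Λ.d μ + n) le_rfl := (h3 n n le_rfl).symm
      _ = Λ.ofObj (Λ.s (z.seg 0 (Λ.d μ + n) (le0 _))) := vertex_seg z _
  · exact seg_congr z rfl hd _ _
  · intro m m' hmm'
    calc z.seg (Λ.d (z.seg 0 (Λ.d μ + n) (le0 _)) + m) (Λ.d (z.seg 0 (Λ.d μ + n) (le0 _)) + m')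
          (add_le_add_right hmm' _)
        = z.seg (Λ.d μ + (n + m)) (Λ.d μ + (n + m'))
            (add_le_add_right (add_le_add_right hmm' n) _) :=
          seg_congr z (by rw [hd, add_assoc]) (by rw [hd, add_assoc]) _ _
      _ = x.seg (n + m) (n + m') (add_le_add_right hmm' n) := h3 (n + m) (n + m') _
      _ = x.seg (m + n) (m' + n) (add_le_add_left hmm' n) :=
          seg_congr x (add_comm n m) (add_comm n m') _ _

lemma zset_refine (S : SelfSimilar k G Λ) {t : Triple k G Λ} {μ ν : Λ.Mor} {g : G}
    (ht : t ∈ Zset S μ g ν) (n : NK k) :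
    ∃ g' : G, t ∈ Zset S (t.1.seg 0 (Λ.d μ + n) (le0 _)) g'
      (t.2.2.seg 0 (Λ.d ν + n) (le0 _)) := by
  obtain ⟨x, y, z, hc, hd, heq⟩ := ht
  have h1 : t.1 = y := by rw [heq]
  have h2 : t.2.2 = z := by rw [heq]
  refine ⟨S.res g (x.seg 0 n (le0 n)), ?_⟩
  rw [h1, h2]
  refine ⟨x.shift n, y, z, hc.extend n, ?_, ?_⟩
  · have h3 := hd.extend n
    rwa [← actInf_shift] at h3
  · rw [heq, d_seg0 y, d_seg0 z]
    have hzk : toZ (Λ.d μ + n) - toZ (Λ.d ν + n) = toZ (Λ.d μ) - toZ (Λ.d ν) := by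
      funext i
      simp only [Pi.sub_apply, toZ, Pi.add_apply]
      push_cast; ring
    have hq : (QuotientGroup.mk (transFun (toZ (Λ.d μ + n))
          (S.resInf (S.res g (x.seg 0 n (le0 n))) (x.shift n))) : QkG k G)
        = QuotientGroup.mk (transFun (toZ (Λ.d μ)) (S.resInf g x)) := by
      refine (QuotientGroup.eq).mpr ⟨Λ.d μ + n, fun p hp => ?_⟩
      have hpi : ∀ i, Λ.d μ i + n i ≤ p i := fun i => by
        have := Pi.le_def.mp hp i
        simpa using this
      have hca : ∀ i, toZ (Λ.d μ + n) i ≤ (p i : ℤ) := fun i => by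
        simp only [toZ, Pi.add_apply]
        exact_mod_cast hpi i
      have hcb : ∀ i, toZ (Λ.d μ) i ≤ (p i : ℤ) := fun i => by
        simp only [toZ]
        have := hpi i
        omega
      have hab : transFun (toZ (Λ.d μ + n))
            (S.resInf (S.res g (x.seg 0 n (le0 n))) (x.shift n)) p
          = transFun (toZ (Λ.d μ)) (S.resInf g x) p := by
        simp only [transFun]
        rw [if_pos hca, if_pos hcb]
        set ca : NK k := fun i => ((p i : ℤ) - toZ (Λ.d μ + n) i).toNat with hca'
        set cb : NK k := fun i => ((p i : ℤ) - toZ (Λ.d μ) i).toNat with hcb'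
        have hcab : ca + n = cb := funext fun i => by
          simp only [hca', hcb', Pi.add_apply, toZ]
          have := hpi i
          push_cast
          omega
        simp only [SelfSimilar.resInf]
        calc S.res (S.res g (x.seg 0 n (le0 n))) ((x.shift n).seg 0 ca (le0 ca))
            = S.res (S.res g (x.seg 0 n (le0 n)))
                (x.seg n (ca + n) (nk_le_add_left n ca)) :=
              congrArg _ (seg_congr x (zero_add n) rfl _ _)
          _ = S.res g (x.seg 0 (ca + n) (le0 _)) := res_shift S g x n ca
          _ = S.res g (x.seg 0 cb (le0 cb)) := congrArg _ (seg_congr x rfl hcab _ _)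
      show (transFun (toZ (Λ.d μ + n))
            (S.resInf (S.res g (x.seg 0 n (le0 n))) (x.shift n)))⁻¹ p
          * transFun (toZ (Λ.d μ)) (S.resInf g x) p = 1
      rw [Pi.inv_apply, hab, inv_mul_cancel]
    rw [hq, hzk]

lemma Zset_fst {S : SelfSimilar k G Λ} {t : Triple k G Λ} {μ ν : Λ.Mor} {g : G}
    (ht : t ∈ Zset S μ g ν) : t.1.seg 0 (Λ.d μ) (le0 _) = μ := by
  obtain ⟨x, y, z, hc, hd, heq⟩ := ht
  rw [heq]; exact hd.2.1

lemma Zset_snd {S : SelfSimilar k G Λ} {t : Triple k G Λ} {μ ν : Λ.Mor} {g : G}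
    (ht : t ∈ Zset S μ g ν) : t.2.2.seg 0 (Λ.d ν) (le0 _) = ν := by
  obtain ⟨x, y, z, hc, hd, heq⟩ := ht
  rw [heq]; exact hc.2.1

lemma Zset_zk {S : SelfSimilar k G Λ} {t : Triple k G Λ} {μ ν : Λ.Mor} {g : G}
    (ht : t ∈ Zset S μ g ν) : t.2.1.2 = toZ (Λ.d μ) - toZ (Λ.d ν) := by
  obtain ⟨x, y, z, hc, hd, heq⟩ := ht
  rw [heq]

lemma Zset_inj {S : SelfSimilar k G Λ} {t t' : Triple k G Λ} {μ ν : Λ.Mor} {g : G}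
    (ht : t ∈ Zset S μ g ν) (ht' : t' ∈ Zset S μ g ν)
    (h22 : t.2.2 = t'.2.2) : t = t' := by
  obtain ⟨x, y, z, hc, hd, heq⟩ := ht
  obtain ⟨x', y', z', hc', hd', heq'⟩ := ht'
  subst heq; subst heq'
  have hz : z = z' := h22
  subst hz
  have hx : x = x' := concat_witness_eq hc hc'
  subst hx
  have hy : y = y' := concat_out_eq hd hd'
  subst hy
  rfl

lemma group_eq_of_inter (S : SelfSimilar k G Λ) (hpf : S.PseudoFree)
    {μ ν : Λ.Mor} {g1 g2 : G}
    (h : (Zset S μ g1 ν ∩ Zset S μ g2 ν).Nonempty) : g1 = g2 := by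
  obtain ⟨t, h1, h2⟩ := h
  obtain ⟨x1, y1, z1, hc1, hd1, heq1⟩ := h1
  obtain ⟨x2, y2, z2, hc2, hd2, heq2⟩ := h2
  subst heq1
  have hy : y1 = y2 := congrArg Prod.fst heq2
  have hz : z1 = z2 := congrArg (fun t => t.2.2) heq2
  have hqq : (QuotientGroup.mk (transFun (toZ (Λ.d μ)) (S.resInf g1 x1)) : QkG k G)
      = QuotientGroup.mk (transFun (toZ (Λ.d μ)) (S.resInf g2 x2)) :=
    congrArg (fun t => t.2.1.1) heq2
  subst hy; subst hz
  have hx : x1 = x2 := concat_witness_eq hc1 hc2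
  subst hx
  have hw : S.actInf g1 x1 = S.actInf g2 x1 := concat_witness_eq hd1 hd2
  obtain ⟨z0, hz0⟩ := (QuotientGroup.eq).mp hqq
  set p : NK k := fun i => max (z0 i) (Λ.d μ i) with hp'
  have hz0p : z0 ≤ p := Pi.le_def.mpr fun i => le_max_left _ _
  have hcond : ∀ i, toZ (Λ.d μ) i ≤ (p i : ℤ) := fun i => by
    have : Λ.d μ i ≤ p i := le_max_right _ _
    simp only [toZ]
    exact_mod_cast this
  have heval := hz0 p hz0p
  rw [Pi.mul_apply, Pi.inv_apply] at heval
  have heq2' := inv_mul_eq_one.mp heval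
  simp only [transFun] at heq2'
  rw [if_pos hcond, if_pos hcond] at heq2'
  set c : NK k := fun i => ((p i : ℤ) - toZ (Λ.d μ) i).toNat with hc'
  have hres : S.res g1 (x1.seg 0 c (le0 c)) = S.res g2 (x1.seg 0 c (le0 c)) := heq2'
  have hact0 : S.act (S.res g1 (x1.seg 0 0 (le0 0))) (x1.seg 0 c (le0 c))
      = S.act (S.res g2 (x1.seg 0 0 (le0 0))) (x1.seg 0 c (le0 c)) :=
    congrArg (fun w : InfPath Λ => w.seg 0 c (le0 c)) hw
  have hx00 : x1.seg 0 0 (le0 0) = Λ.ofObj (Λ.s ν) := hc1.1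
  rw [hx00, S.res_ofObj, S.res_ofObj] at hact0
  have hg : g2⁻¹ * g1 = 1 := by
    apply hpf _ (x1.seg 0 c (le0 c))
    · rw [S.act_mul, hact0, ← S.act_mul, inv_mul_cancel, S.act_one]
    · rw [S.res_mul, hact0, hres, ← S.res_mul, inv_mul_cancel, S.res_one]
  exact (inv_mul_eq_one.mp hg).symm

lemma Zset_subset_Gpd (S : SelfSimilar k G Λ) (μ : Λ.Mor) (g : G) (ν : Λ.Mor) :
    Zset S μ g ν ⊆ Gpd S := by
  intro t ht
  obtain ⟨x, y, z, hc, hd, heq⟩ := ht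
  have h1 : (S.actInf g x).seg 0 0 le_rfl = Λ.ofObj (Λ.s μ) := hd.1
  have h2 : (S.actInf g x).seg 0 0 le_rfl = S.act g (Λ.ofObj (Λ.s ν)) := by
    show S.act (S.res g (x.seg 0 0 (le0 0))) (x.seg 0 0 le_rfl) = _
    rw [show x.seg 0 0 (le0 0) = Λ.ofObj (Λ.s ν) from hc.1, S.res_ofObj]
  have hcompat : Λ.s μ = S.actV g (Λ.s ν) := by
    show Λ.s μ = Λ.s (S.act g (Λ.ofObj (Λ.s ν)))
    rw [← h2, h1, Λ.s_ofObj]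
  exact ⟨g, μ, ν, hcompat, ⟨x, y, z, hc, hd, heq⟩⟩

lemma nk_add_sub_of_le {a N : NK k} (h : a ≤ N) : a + (fun i => N i - a i) = N :=
  funext fun i => by
    simp only [Pi.add_apply]
    have := Pi.le_def.mp h i
    omega

lemma separation (S : SelfSimilar k G Λ) (hpf : S.PseudoFree) {t1 t2 : Triple k G Λ}
    {μa νa μb νb : Λ.Mor} {ga gb : G}
    (hm1 : t1 ∈ Zset S μa ga νa) (hm2 : t2 ∈ Zset S μb gb νb) (hne : t1 ≠ t2) :
    ∃ (μ1 ν1 : Λ.Mor) (g1 : G) (μ2 ν2 : Λ.Mor) (g2 : G),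
      t1 ∈ Zset S μ1 g1 ν1 ∧ t2 ∈ Zset S μ2 g2 ν2 ∧
        Disjoint (Zset S μ1 g1 ν1) (Zset S μ2 g2 ν2) := by
  by_cases hzk : t1.2.1.2 = t2.2.1.2
  case neg =>
    refine ⟨μa, νa, ga, μb, νb, gb, hm1, hm2,
      Set.disjoint_left.mpr fun t ht1 ht2 => hzk ?_⟩
    exact ((Zset_zk hm1).trans (Zset_zk ht1).symm).trans
      ((Zset_zk ht2).trans (Zset_zk hm2).symm)
  by_cases hX : t1.2.2 = t2.2.2
  case neg =>
    obtain ⟨m, hm⟩ := exists_initial_ne hX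
    set N : NK k := fun i => max (Λ.d νa i) (max (Λ.d νb i) (m i)) with hN
    have hle1 : Λ.d νa ≤ N := Pi.le_def.mpr fun i => le_max_left _ _
    have hle2 : Λ.d νb ≤ N := Pi.le_def.mpr fun i => le_max_of_le_right (le_max_left _ _)
    have hlem : m ≤ N := Pi.le_def.mpr fun i => le_max_of_le_right (le_max_right _ _)
    obtain ⟨g1', hA⟩ := zset_refine S hm1 (fun i => N i - Λ.d νa i)
    obtain ⟨g2', hB⟩ := zset_refine S hm2 (fun i => N i - Λ.d νb i)
    rw [seg_congr t1.2.2 rfl (nk_add_sub_of_le hle1) (le0 _) (le0 N)] at hA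
    rw [seg_congr t2.2.2 rfl (nk_add_sub_of_le hle2) (le0 _) (le0 N)] at hB
    refine ⟨_, _, g1', _, _, g2', hA, hB,
      Set.disjoint_left.mpr fun t ht1 ht2 => ?_⟩
    have s1 := Zset_snd ht1
    have s2 := Zset_snd ht2
    rw [d_seg0] at s1 s2
    exact hm (seg_initial_eq hlem (s1.symm.trans s2))
  by_cases hY : t1.1 = t2.1
  case neg =>
    obtain ⟨m, hm⟩ := exists_initial_ne hY
    set M : NK k := fun i => max (Λ.d μa i) (max (Λ.d μb i) (m i)) with hM
    have hle1 : Λ.d μa ≤ M := Pi.le_def.mpr fun i => le_max_left _ _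
    have hle2 : Λ.d μb ≤ M := Pi.le_def.mpr fun i => le_max_of_le_right (le_max_left _ _)
    have hlem : m ≤ M := Pi.le_def.mpr fun i => le_max_of_le_right (le_max_right _ _)
    obtain ⟨g1', hA⟩ := zset_refine S hm1 (fun i => M i - Λ.d μa i)
    obtain ⟨g2', hB⟩ := zset_refine S hm2 (fun i => M i - Λ.d μb i)
    rw [seg_congr t1.1 rfl (nk_add_sub_of_le hle1) (le0 _) (le0 M)] at hA
    rw [seg_congr t2.1 rfl (nk_add_sub_of_le hle2) (le0 _) (le0 M)] at hB
    refine ⟨_, _, g1', _, _, g2', hA, hB,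
      Set.disjoint_left.mpr fun t ht1 ht2 => ?_⟩
    have s1 := Zset_fst ht1
    have s2 := Zset_fst ht2
    rw [d_seg0] at s1 s2
    exact hm (seg_initial_eq hlem (s1.symm.trans s2))
  case pos =>
    set N : NK k := fun i => max (Λ.d νa i) (Λ.d νb i) with hN
    have hle1 : Λ.d νa ≤ N := Pi.le_def.mpr fun i => le_max_left _ _
    have hle2 : Λ.d νb ≤ N := Pi.le_def.mpr fun i => le_max_right _ _
    obtain ⟨g1', hA⟩ := zset_refine S hm1 (fun i => N i - Λ.d νa i)
    obtain ⟨g2', hB⟩ := zset_refine S hm2 (fun i => N i - Λ.d νb i)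
    have ezk : ∀ i, (Λ.d μa i : ℤ) - Λ.d νa i = (Λ.d μb i : ℤ) - Λ.d νb i := fun i => by
      have h0 := ((Zset_zk hm1).symm.trans hzk).trans (Zset_zk hm2)
      have h1 := congrFun h0 i
      simpa [toZ, Pi.sub_apply] using h1
    have eM : Λ.d μb + (fun i => N i - Λ.d νb i) = Λ.d μa + (fun i => N i - Λ.d νa i) :=
      funext fun i => by
        simp only [Pi.add_apply]
        have h1 := Pi.le_def.mp hle1 i
        have h2 := Pi.le_def.mp hle2 i
        have h3 := ezk i
        omega
    rw [seg_congr t1.2.2 rfl (nk_add_sub_of_le hle1) (le0 _) (le0 N)] at hA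
    rw [seg_congr t2.2.2 rfl (nk_add_sub_of_le hle2) (le0 _) (le0 N)] at hB
    rw [seg_congr t2.1 rfl eM (le0 _) (le0 _)] at hB
    rw [← hY, ← hX] at hB
    by_cases hgg : g1' = g2'
    · rw [← hgg] at hB
      exact absurd (Zset_inj hA hB hX) hne
    · refine ⟨_, _, g1', _, _, g2', hA, hB, ?_⟩
      by_contra hdis
      exact hgg (group_eq_of_inter S hpf (Set.not_disjoint_iff_nonempty_inter.mp hdis))

/-- for a pseudo free action, the topology on `G_{G,Λ}` generated by the
basic sets `B_{G,Λ}` is Hausdorff. -/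
theorem stmt13 {k : ℕ} (hk : 0 < k) (G : Type) [Group G] [Countable G]
    (Λ : KGraph k) (S : SelfSimilar k G Λ) (hpf : S.PseudoFree) :
    @T2Space {t : Triple k G Λ // t ∈ Gpd S} (gpdTop S) := by
  letI : TopologicalSpace {t : Triple k G Λ // t ∈ Gpd S} := gpdTop S
  constructor
  intro a b hab
  have hne : (a : Triple k G Λ) ≠ (b : Triple k G Λ) := fun h => hab (Subtype.ext h)
  obtain ⟨ga, μa, νa, _, hma⟩ := a.2
  obtain ⟨gb, μb, νb, _, hmb⟩ := b.2
  obtain ⟨μ1, ν1, g1, μ2, ν2, g2, hA, hB, hd⟩ := separation S hpf hma hmb hne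
  refine ⟨{t | (t : Triple k G Λ) ∈ Zset S μ1 g1 ν1},
    {t | (t : Triple k G Λ) ∈ Zset S μ2 g2 ν2}, ?_, ?_, hA, hB, ?_⟩
  · refine TopologicalSpace.GenerateOpen.basic _ ⟨μ1, ν1, g1, ?_⟩
    ext u
    simp only [Set.mem_image, Set.mem_setOf_eq]
    exact ⟨fun ⟨t, ht, he⟩ => he ▸ ht,
      fun hu => ⟨⟨u, Zset_subset_Gpd S μ1 g1 ν1 hu⟩, hu, rfl⟩⟩
  · refine TopologicalSpace.GenerateOpen.basic _ ⟨μ2, ν2, g2, ?_⟩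
    ext u
    simp only [Set.mem_image, Set.mem_setOf_eq]
    exact ⟨fun ⟨t, ht, he⟩ => he ▸ ht,
      fun hu => ⟨⟨u, Zset_subset_Gpd S μ2 g2 ν2 hu⟩, hu, rfl⟩⟩
  · exact Set.disjoint_left.mpr fun t ht1 ht2 => (Set.disjoint_left.mp hd) ht1 ht2

end SSKG
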